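/- For dependence logic FO(dep) (a downwards closed logic), compactness for formulas is equivalent to compactness for sentences: the statement 'for every vocabulary τ, every set Γ of FO(dep) τ-formulas all of whose finite subsets are satisfiable by a nonempty team is satisfiable by a nonempty team' holds if and only if the statement 'for every vocabulary τ, every set Γ of FO(dep) τ-sentences all of whose finite subsets are satisfiable by a nonempty team is satisfiable by a nonempty team' holds. -/

import Mathlib

universe u v w

open FirstOrder FirstOrder.Language Filter

namespace TeamSemantics

/-- The supplemented team `X(F/x) = {s(a/x) : s ∈ X, a ∈ F(s)}`. -/
def supFun {V M : Type*} [DecidableEq V] (X : Set (V → M)) (x : V) (F : (V → M) → Set M) :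
    Set (V → M) :=
  {t | ∃ s ∈ X, ∃ a ∈ F s, t = Function.update s x a}

/-- The team `X(a/x) = {s(a/x) : s ∈ X}`. -/
def supElt {V M : Type*} [DecidableEq V] (X : Set (V → M)) (x : V) (a : M) : Set (V → M) :=
  {t | ∃ s ∈ X, t = Function.update s x a}

/-- The duplicated team `X(M/x) = {s(a/x) : s ∈ X, a ∈ M}`. -/
def dup {V M : Type*} [DecidableEq V] (X : Set (V → M)) (x : V) : Set (V → M) :=
  {t | ∃ s ∈ X, ∃ a : M, t = Function.update s x a}

/-- Formulas of dependence logic `FO(dep)` over the vocabulary `L`, with variables from `V`,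
in negation normal form: first-order literals and dependence atoms, closed under
`∧`, `∨`, `∃`, `∀`. -/
inductive DepFormula (L : FirstOrder.Language.{u, u}) (V : Type v) : Type (max u v) where
  | equal : L.Term V → L.Term V → DepFormula L V
  | nequal : L.Term V → L.Term V → DepFormula L V
  | rel : ∀ {n : ℕ}, L.Relations n → (Fin n → L.Term V) → DepFormula L V
  | nrel : ∀ {n : ℕ}, L.Relations n → (Fin n → L.Term V) → DepFormula L V
  | dep : ∀ {n : ℕ}, (Fin n → V) → V → DepFormula L V
  | and : DepFormula L V → DepFormula L V → DepFormula L V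
  | or : DepFormula L V → DepFormula L V → DepFormula L V
  | ex : V → DepFormula L V → DepFormula L V
  | all : V → DepFormula L V → DepFormula L V

/-- Lax team semantics `M ⊨_X φ` for dependence logic. -/
def Models {L : FirstOrder.Language.{u, u}} {V : Type v} [DecidableEq V]
    (M : Type w) [str : L.Structure M] :
    DepFormula L V → Set (V → M) → Prop
  | .equal t₁ t₂, X => ∀ s ∈ X, t₁.realize s = t₂.realize s
  | .nequal t₁ t₂, X => ∀ s ∈ X, t₁.realize s ≠ t₂.realize s
  | .rel R ts, X => ∀ s ∈ X, Structure.RelMap R (fun k => (ts k).realize s)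
  | .nrel R ts, X => ∀ s ∈ X, ¬ Structure.RelMap R (fun k => (ts k).realize s)
  | .dep xs y, X => ∀ s ∈ X, ∀ s' ∈ X, (∀ k, s (xs k) = s' (xs k)) → s y = s' y
  | .and φ ψ, X => Models M φ X ∧ Models M ψ X
  | .or φ ψ, X => ∃ Y Z, Y ∪ Z = X ∧ Models M φ Y ∧ Models M ψ Z
  | .ex x φ, X => ∃ F : (V → M) → Set M, (∀ s ∈ X, (F s).Nonempty) ∧ Models M φ (supFun X x F)
  | .all x φ, X => Models M φ (dup X x)

/-- The set of free variables of a formula of dependence logic. -/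
def freeVars {L : FirstOrder.Language.{u, u}} {V : Type v} [DecidableEq V] :
    DepFormula L V → Set V
  | .equal t₁ t₂ => ↑t₁.varFinset ∪ ↑t₂.varFinset
  | .nequal t₁ t₂ => ↑t₁.varFinset ∪ ↑t₂.varFinset
  | .rel _ ts => ⋃ k, ↑(ts k).varFinset
  | .nrel _ ts => ⋃ k, ↑(ts k).varFinset
  | .dep xs y => Set.range xs ∪ {y}
  | .and φ ψ => freeVars φ ∪ freeVars ψ
  | .or φ ψ => freeVars φ ∪ freeVars ψ
  | .ex x φ => freeVars φ \ {x}
  | .all x φ => freeVars φ \ {x}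

/-- A sentence of dependence logic is a formula with no free variables. -/
def IsSentence {L : FirstOrder.Language.{u, u}} {V : Type v} [DecidableEq V]
    (φ : DepFormula L V) : Prop :=
  freeVars φ = ∅

/-- A set of formulas of dependence logic is satisfiable if some structure together with
some nonempty team satisfies all of its members. -/
def Satisfiable {L : FirstOrder.Language.{u, u}} {V : Type u} [DecidableEq V]
    (Γ : Set (DepFormula L V)) : Prop :=
  ∃ (M : Type u) (str : L.Structure M) (X : Set (V → M)),
    X.Nonempty ∧ ∀ φ ∈ Γ, Models (str := str) M φ X


section Helpers

variable {L : FirstOrder.Language.{u, u}} {V : Type v} [DecidableEq V] {M : Type w}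
  [L.Structure M]

theorem realize_congrVars {t : L.Term V} {s s' : V → M}
    (h : ∀ v ∈ t.varFinset, s v = s' v) : t.realize s = t.realize s' := by
  induction t with
  | var v => exact h v (by simp [Term.varFinset])
  | func f ts ih =>
    simp only [Term.realize]
    congr 1
    funext i
    exact ih i fun v hv => h v (by
      simp only [Term.varFinset, Finset.mem_biUnion, Finset.mem_univ, true_and]
      exact ⟨i, hv⟩)

theorem supFun_mono {X Y : Set (V → M)} (h : X ⊆ Y) (x : V) (F : (V → M) → Set M) :
    supFun X x F ⊆ supFun Y x F := by
  rintro u ⟨s, hs, a, ha, rfl⟩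
  exact ⟨s, h hs, a, ha, rfl⟩

theorem dup_mono {X Y : Set (V → M)} (h : X ⊆ Y) (x : V) : dup X x ⊆ dup Y x := by
  rintro u ⟨s, hs, a, rfl⟩
  exact ⟨s, h hs, a, rfl⟩

/-- Downward closure of dependence logic. -/
theorem models_mono {φ : DepFormula L V} {X Y : Set (V → M)} (hXY : X ⊆ Y)
    (h : Models M φ Y) : Models M φ X := by
  induction φ generalizing X Y with
  | equal t₁ t₂ => exact fun s hs => h s (hXY hs)
  | nequal t₁ t₂ => exact fun s hs => h s (hXY hs)
  | rel R ts => exact fun s hs => h s (hXY hs)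
  | nrel R ts => exact fun s hs => h s (hXY hs)
  | dep xs y => exact fun s hs s' hs' => h s (hXY hs) s' (hXY hs')
  | and φ ψ ihφ ihψ => exact ⟨ihφ hXY h.1, ihψ hXY h.2⟩
  | or φ ψ ihφ ihψ =>
    obtain ⟨Y₁, Y₂, rfl, h₁, h₂⟩ := h
    refine ⟨X ∩ Y₁, X ∩ Y₂, ?_, ihφ Set.inter_subset_right h₁, ihψ Set.inter_subset_right h₂⟩
    rw [← Set.inter_union_distrib_left]
    exact Set.inter_eq_left.mpr hXY
  | ex x φ ih =>
    obtain ⟨F, hne, hm⟩ := h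
    exact ⟨F, fun s hs => hne s (hXY hs), ih (supFun_mono hXY x F) hm⟩
  | all x φ ih => exact ih (dup_mono hXY x) h

/-- Two teams look the same on the variable set `A`. -/
def Agrees (A : Set V) (X Y : Set (V → M)) : Prop :=
  (∀ s ∈ X, ∃ t ∈ Y, ∀ v ∈ A, s v = t v) ∧ (∀ t ∈ Y, ∃ s ∈ X, ∀ v ∈ A, s v = t v)

theorem Agrees.symm {A : Set V} {X Y : Set (V → M)} (h : Agrees A X Y) : Agrees A Y X :=
  ⟨fun t ht => (h.2 t ht).imp fun s hs => ⟨hs.1, fun v hv => (hs.2 v hv).symm⟩,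
   fun s hs => (h.1 s hs).imp fun t ht => ⟨ht.1, fun v hv => (ht.2 v hv).symm⟩⟩


/-- Locality: satisfaction only depends on the team's restriction to the free variables. -/
theorem models_agrees {φ : DepFormula L V} {A : Set V} (hA : freeVars φ ⊆ A)
    {X Y : Set (V → M)} (hXY : Agrees A X Y) (h : Models M φ X) : Models M φ Y := by
  induction φ generalizing A X Y with
  | equal t₁ t₂ =>
    intro t ht
    obtain ⟨s, hs, hst⟩ := hXY.2 t ht
    have e1 : t₁.realize t = t₁.realize s :=
      realize_congrVars fun v hv => (hst v (hA (Set.mem_union_left _ hv))).symm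
    have e2 : t₂.realize t = t₂.realize s :=
      realize_congrVars fun v hv => (hst v (hA (Set.mem_union_right _ hv))).symm
    rw [e1, e2]; exact h s hs
  | nequal t₁ t₂ =>
    intro t ht
    obtain ⟨s, hs, hst⟩ := hXY.2 t ht
    have e1 : t₁.realize t = t₁.realize s :=
      realize_congrVars fun v hv => (hst v (hA (Set.mem_union_left _ hv))).symm
    have e2 : t₂.realize t = t₂.realize s :=
      realize_congrVars fun v hv => (hst v (hA (Set.mem_union_right _ hv))).symm
    rw [e1, e2]; exact h s hs
  | rel R ts =>
    intro t ht
    obtain ⟨s, hs, hst⟩ := hXY.2 t ht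
    have e : (fun k => (ts k).realize t) = fun k => (ts k).realize s := by
      funext k
      exact realize_congrVars fun v hv =>
        (hst v (hA (Set.mem_iUnion.mpr ⟨k, hv⟩))).symm
    rw [e]; exact h s hs
  | nrel R ts =>
    intro t ht
    obtain ⟨s, hs, hst⟩ := hXY.2 t ht
    have e : (fun k => (ts k).realize t) = fun k => (ts k).realize s := by
      funext k
      exact realize_congrVars fun v hv =>
        (hst v (hA (Set.mem_iUnion.mpr ⟨k, hv⟩))).symm
    rw [e]; exact h s hs
  | dep xs y =>
    intro t ht t' ht' hag
    obtain ⟨s, hs, hst⟩ := hXY.2 t ht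
    obtain ⟨s', hs', hst'⟩ := hXY.2 t' ht'
    have hy : y ∈ A := hA (Set.mem_union_right _ rfl)
    have hx : ∀ k, xs k ∈ A := fun k => hA (Set.mem_union_left _ ⟨k, rfl⟩)
    have : s y = s' y := h s hs s' hs' fun k => by
      rw [hst _ (hx k), hst' _ (hx k)]; exact hag k
    rw [← hst _ hy, ← hst' _ hy]; exact this
  | and φ ψ ihφ ihψ =>
    exact ⟨ihφ (subset_trans Set.subset_union_left hA) hXY h.1,
      ihψ (subset_trans Set.subset_union_right hA) hXY h.2⟩
  | or φ ψ ihφ ihψ =>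
    obtain ⟨X₁, X₂, rfl, h₁, h₂⟩ := h
    refine ⟨{t ∈ Y | ∃ s ∈ X₁, ∀ v ∈ A, s v = t v},
            {t ∈ Y | ∃ s ∈ X₂, ∀ v ∈ A, s v = t v}, ?_, ?_, ?_⟩
    · ext t
      simp only [Set.mem_union, Set.mem_setOf_eq]
      constructor
      · rintro (⟨ht, _⟩ | ⟨ht, _⟩) <;> exact ht
      · intro ht
        obtain ⟨s, hs, hst⟩ := hXY.2 t ht
        rcases hs with hs | hs
        · exact Or.inl ⟨ht, s, hs, hst⟩
        · exact Or.inr ⟨ht, s, hs, hst⟩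
    · refine ihφ (subset_trans Set.subset_union_left hA) ⟨?_, ?_⟩ h₁
      · intro s hs
        obtain ⟨t, ht, hst⟩ := hXY.1 s (Set.mem_union_left _ hs)
        exact ⟨t, ⟨ht, s, hs, hst⟩, hst⟩
      · rintro t ⟨ht, s, hs, hst⟩
        exact ⟨s, hs, hst⟩
    · refine ihψ (subset_trans Set.subset_union_right hA) ⟨?_, ?_⟩ h₂
      · intro s hs
        obtain ⟨t, ht, hst⟩ := hXY.1 s (Set.mem_union_right _ hs)
        exact ⟨t, ⟨ht, s, hs, hst⟩, hst⟩
      · rintro t ⟨ht, s, hs, hst⟩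
        exact ⟨s, hs, hst⟩
  | ex x φ ih =>
    obtain ⟨F, hne, hm⟩ := h
    classical
    refine ⟨fun t => {a | ∃ s ∈ X, (∀ v ∈ A, s v = t v) ∧ a ∈ F s}, ?_, ?_⟩
    · intro t ht
      obtain ⟨s, hs, hst⟩ := hXY.2 t ht
      obtain ⟨a, ha⟩ := hne s hs
      exact ⟨a, s, hs, hst, ha⟩
    · refine ih (A := A ∪ {x}) ?_ ⟨?_, ?_⟩ hm
      · intro v hv
        by_cases hvx : v = x
        · exact Set.mem_union_right _ hvx
        · exact Set.mem_union_left _ (hA ⟨hv, hvx⟩)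
      · rintro u ⟨s, hs, a, ha, rfl⟩
        obtain ⟨t, ht, hst⟩ := hXY.1 s hs
        refine ⟨Function.update t x a, ⟨t, ht, a, ⟨s, hs, fun v hv => (hst v hv), ha⟩, rfl⟩, ?_⟩
        intro v hv
        by_cases hvx : v = x
        · subst hvx; simp [Function.update_self]
        · rcases hv with hv | hv
          · simp only [Function.update_of_ne hvx]; exact hst v hv
          · exact absurd hv hvx
      · rintro u ⟨t, ht, a, ⟨s, hs, hst, ha⟩, rfl⟩
        refine ⟨Function.update s x a, ⟨s, hs, a, ha, rfl⟩, ?_⟩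
        intro v hv
        by_cases hvx : v = x
        · subst hvx; simp [Function.update_self]
        · rcases hv with hv | hv
          · simp only [Function.update_of_ne hvx]; exact hst v hv
          · exact absurd hv hvx
  | all x φ ih =>
    refine ih (A := A ∪ {x}) ?_ ⟨?_, ?_⟩ h
    · intro v hv
      by_cases hvx : v = x
      · exact Set.mem_union_right _ hvx
      · exact Set.mem_union_left _ (hA ⟨hv, hvx⟩)
    · rintro u ⟨s, hs, a, rfl⟩
      obtain ⟨t, ht, hst⟩ := hXY.1 s hs
      refine ⟨Function.update t x a, ⟨t, ht, a, rfl⟩, ?_⟩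
      intro v hv
      by_cases hvx : v = x
      · subst hvx; simp [Function.update_self]
      · rcases hv with hv | hv
        · simp only [Function.update_of_ne hvx]; exact hst v hv
        · exact absurd hv hvx
    · rintro u ⟨t, ht, a, rfl⟩
      obtain ⟨s, hs, hst⟩ := hXY.2 t ht
      refine ⟨Function.update s x a, ⟨s, hs, a, rfl⟩, ?_⟩
      intro v hv
      by_cases hvx : v = x
      · subst hvx; simp [Function.update_self]
      · rcases hv with hv | hv
        · simp only [Function.update_of_ne hvx]; exact hst v hv
        · exact absurd hv hvx

theorem freeVars_finite (φ : DepFormula L V) : (freeVars φ).Finite := by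
  induction φ with
  | equal t₁ t₂ => exact (t₁.varFinset.finite_toSet).union (t₂.varFinset.finite_toSet)
  | nequal t₁ t₂ => exact (t₁.varFinset.finite_toSet).union (t₂.varFinset.finite_toSet)
  | rel R ts => exact Set.finite_iUnion fun k => (ts k).varFinset.finite_toSet
  | nrel R ts => exact Set.finite_iUnion fun k => (ts k).varFinset.finite_toSet
  | dep xs y => exact (Set.finite_range xs).union (Set.finite_singleton y)
  | and φ ψ ihφ ihψ => exact ihφ.union ihψ
  | or φ ψ ihφ ihψ => exact ihφ.union ihψ
  | ex x φ ih => exact ih.diff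
  | all x φ ih => exact ih.diff


end Helpers

section OnFormula

variable {L L' : FirstOrder.Language.{u, u}} {V : Type v} [DecidableEq V] {M : Type w}

/-- Translating a dependence-logic formula along a language map. -/
def DepFormula.onFormula (g : L →ᴸ L') : DepFormula L V → DepFormula L' V
  | .equal t₁ t₂ => .equal (g.onTerm t₁) (g.onTerm t₂)
  | .nequal t₁ t₂ => .nequal (g.onTerm t₁) (g.onTerm t₂)
  | .rel R ts => .rel (g.onRelation R) fun i => g.onTerm (ts i)
  | .nrel R ts => .nrel (g.onRelation R) fun i => g.onTerm (ts i)
  | .dep xs y => .dep xs y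
  | .and φ ψ => .and (φ.onFormula g) (ψ.onFormula g)
  | .or φ ψ => .or (φ.onFormula g) (ψ.onFormula g)
  | .ex x φ => .ex x (φ.onFormula g)
  | .all x φ => .all x (φ.onFormula g)

theorem varFinset_onTerm (g : L →ᴸ L') (t : L.Term V) :
    (g.onTerm t).varFinset = t.varFinset := by
  induction t with
  | var v => rfl
  | func f ts ih => simp only [LHom.onTerm, Term.varFinset, ih]

theorem freeVars_onFormula (g : L →ᴸ L') (φ : DepFormula L V) :
    freeVars (φ.onFormula g) = freeVars φ := by
  induction φ with
  | equal t₁ t₂ => simp [DepFormula.onFormula, freeVars, varFinset_onTerm]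
  | nequal t₁ t₂ => simp [DepFormula.onFormula, freeVars, varFinset_onTerm]
  | rel R ts => simp [DepFormula.onFormula, freeVars, varFinset_onTerm]
  | nrel R ts => simp [DepFormula.onFormula, freeVars, varFinset_onTerm]
  | dep xs y => rfl
  | and φ ψ ihφ ihψ => simp [DepFormula.onFormula, freeVars, ihφ, ihψ]
  | or φ ψ ihφ ihψ => simp [DepFormula.onFormula, freeVars, ihφ, ihψ]
  | ex x φ ih => simp [DepFormula.onFormula, freeVars, ih]
  | all x φ ih => simp [DepFormula.onFormula, freeVars, ih]

theorem models_onFormula [L.Structure M] [L'.Structure M] (g : L →ᴸ L') [g.IsExpansionOn M]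
    (φ : DepFormula L V) (X : Set (V → M)) :
    Models M (φ.onFormula g) X ↔ Models M φ X := by
  induction φ generalizing X with
  | equal t₁ t₂ => simp [DepFormula.onFormula, Models, LHom.realize_onTerm]
  | nequal t₁ t₂ => simp [DepFormula.onFormula, Models, LHom.realize_onTerm]
  | rel R ts => simp [DepFormula.onFormula, Models, LHom.realize_onTerm, g.map_onRelation]
  | nrel R ts => simp [DepFormula.onFormula, Models, LHom.realize_onTerm, g.map_onRelation]
  | dep xs y => rfl
  | and φ ψ ihφ ihψ => simp only [DepFormula.onFormula, Models, ihφ, ihψ]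
  | or φ ψ ihφ ihψ => simp only [DepFormula.onFormula, Models, ihφ, ihψ]
  | ex x φ ih => simp only [DepFormula.onFormula, Models, ih]
  | all x φ ih => simp only [DepFormula.onFormula, Models, ih]

end OnFormula

section Pin

variable {L : FirstOrder.Language.{u, u}} {V : Type v} [DecidableEq V] {M : Type w}

/-- Existentially quantify the variables in `l`, pinning each to the value of a fixed term. -/
def pin (ct : V → L.Term V) (l : List V) (ψ : DepFormula L V) : DepFormula L V :=
  l.foldr (fun v acc => .ex v (.and (.equal (.var v) (ct v)) acc)) ψ

/-- Successively update all assignments of a team at the variables in `l` with fixed values. -/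
def pinTeam (c : V → M) (X : Set (V → M)) (l : List V) : Set (V → M) :=
  l.foldl (fun X v => supElt X v (c v)) X

theorem freeVars_pin {ct : V → L.Term V} (hct : ∀ v, (ct v).varFinset = (∅ : Finset V))
    (l : List V) (ψ : DepFormula L V) :
    freeVars (pin ct l ψ) = freeVars ψ \ {v | v ∈ l} := by
  induction l with
  | nil => simp [pin]
  | cons v l ih =>
    show freeVars (.ex v (.and (.equal (.var v) (ct v)) (pin ct l ψ))) = _
    simp only [freeVars, ih, hct v, Term.varFinset]
    ext w
    by_cases hwv : w = v <;> simp [hwv, List.mem_cons] <;> tauto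

theorem models_exEq [L.Structure M] {x : V} {t : L.Term V} {a : M}
    (ht : ∀ s : V → M, t.realize s = a) {ψ : DepFormula L V} {X : Set (V → M)} :
    Models M (.ex x (.and (.equal (.var x) t) ψ)) X ↔ Models M ψ (supElt X x a) := by
  constructor
  · rintro ⟨F, hne, heq, hψ⟩
    have hXeq : supFun X x F = supElt X x a := by
      ext u
      constructor
      · rintro ⟨s, hs, b, hb, rfl⟩
        have := heq _ ⟨s, hs, b, hb, rfl⟩
        simp only [Term.realize, Function.update_self, ht] at this
        rw [this]
        exact ⟨s, hs, rfl⟩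
      · rintro ⟨s, hs, rfl⟩
        obtain ⟨b, hb⟩ := hne s hs
        have := heq _ ⟨s, hs, b, hb, rfl⟩
        simp only [Term.realize, Function.update_self, ht] at this
        rw [← this]
        exact ⟨s, hs, b, hb, rfl⟩
    rw [← hXeq]; exact hψ
  · intro hψ
    refine ⟨fun _ => {a}, fun s _ => ⟨a, rfl⟩, ?_, ?_⟩
    · rintro u ⟨s, hs, b, hb, rfl⟩
      rcases hb with rfl
      simp [Term.realize, Function.update_self, ht]
    · have hXeq : supFun X x (fun _ => ({a} : Set M)) = supElt X x a := by
        ext u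
        constructor
        · rintro ⟨s, hs, b, rfl, rfl⟩; exact ⟨s, hs, rfl⟩
        · rintro ⟨s, hs, rfl⟩; exact ⟨s, hs, a, rfl, rfl⟩
      rw [hXeq]; exact hψ

theorem models_pin [L.Structure M] {ct : V → L.Term V} {c : V → M}
    (hct : ∀ v (s : V → M), (ct v).realize s = c v) (l : List V) (ψ : DepFormula L V)
    (X : Set (V → M)) :
    Models M (pin ct l ψ) X ↔ Models M ψ (pinTeam c X l) := by
  induction l generalizing X with
  | nil => rfl
  | cons v l ih =>
    show Models M (.ex v (.and (.equal (.var v) (ct v)) (pin ct l ψ))) X ↔ _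
    rw [models_exEq (hct v)]
    exact ih _

theorem pinTeam_nonempty {c : V → M} {X : Set (V → M)} (h : X.Nonempty) (l : List V) :
    (pinTeam c X l).Nonempty := by
  induction l generalizing X with
  | nil => exact h
  | cons v l ih =>
    exact ih (by obtain ⟨s, hs⟩ := h; exact ⟨Function.update s v (c v), s, hs, rfl⟩)

theorem pinTeam_mem {c : V → M} {X : Set (V → M)} {l : List V} {u : V → M}
    (h : u ∈ pinTeam c X l) : ∃ s ∈ X, ∀ w, u w = if w ∈ l then c w else s w := by
  induction l generalizing X with
  | nil => exact ⟨u, h, fun w => by simp⟩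
  | cons v l ih =>
    obtain ⟨s', hs', hu⟩ := ih h
    obtain ⟨s, hs, rfl⟩ := hs'
    refine ⟨s, hs, fun w => ?_⟩
    by_cases hwl : w ∈ l
    · simp [hu w, hwl, List.mem_cons, hwl]
    · by_cases hwv : w = v
      · subst hwv
        simp [hu w, hwl, Function.update_self]
      · simp [hu w, hwl, hwv, Function.update_of_ne hwv, List.mem_cons]


end Pin

/-- For dependence logic (a downwards closed logic), compactness for arbitrary sets of
formulas is equivalent to compactness for sets of sentences. -/
theorem depLogic_compactness_formulas_iff_compactness_sentences :
    (∀ (L : FirstOrder.Language.{u, u}) (V : Type u) (_ : DecidableEq V)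
        (Γ : Set (DepFormula L V)),
        (∀ Γ₀ ⊆ Γ, Γ₀.Finite → Satisfiable Γ₀) → Satisfiable Γ) ↔
    (∀ (L : FirstOrder.Language.{u, u}) (V : Type u) (_ : DecidableEq V)
        (Γ : Set (DepFormula L V)),
        (∀ φ ∈ Γ, IsSentence φ) →
        (∀ Γ₀ ⊆ Γ, Γ₀.Finite → Satisfiable Γ₀) → Satisfiable Γ) := by
  constructor
  · intro h L V dV Γ _ hfin
    exact h L V dV Γ hfin
  · intro hsent L V dV Γ hfin
    classical
    set g := L.lhomWithConstants V with hg
    let lφ : DepFormula L V → List V := fun φ => (freeVars_finite φ).toFinset.toList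
    have hlφ : ∀ φ, ∀ v ∈ freeVars φ, v ∈ lφ φ := fun φ v hv =>
      Finset.mem_toList.mpr ((freeVars_finite φ).mem_toFinset.mpr hv)
    let ct : V → (L[[V]]).Term V := fun v => Constants.term (L.con v)
    have hctvar : ∀ v, (ct v).varFinset = (∅ : Finset V) := fun v => by
      ext w
      simp [ct, Constants.term, Term.varFinset]
    let T : DepFormula L V → DepFormula (L[[V]]) V := fun φ =>
      pin ct (lφ φ) (φ.onFormula g)
    have hTsent : ∀ φ, IsSentence (T φ) := by
      intro φ
      show freeVars (pin ct (lφ φ) (φ.onFormula g)) = ∅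
      rw [freeVars_pin hctvar, freeVars_onFormula]
      exact Set.diff_eq_empty.mpr (hlφ φ)
    have key : Satisfiable (T '' Γ) := by
      apply hsent (L[[V]]) V inferInstance (T '' Γ)
      · rintro ψ ⟨φ, _, rfl⟩
        exact hTsent φ
      · intro Δ₀ hΔ₀ hΔfin
        obtain ⟨Γ₀, hΓ₀, hΓ₀fin, hsub⟩ : ∃ Γ₀ ⊆ Γ, Γ₀.Finite ∧ Δ₀ ⊆ T '' Γ₀ :=
          Set.exists_subset_image_finite_and.mp ⟨Δ₀, hΔ₀, hΔfin, subset_refl _⟩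
        obtain ⟨M, str, X, ⟨s₀, hs₀⟩, hmods⟩ := hfin Γ₀ hΓ₀ hΓ₀fin
        letI : (constantsOn V).Structure M := constantsOn.structure s₀
        letI str' : (L[[V]]).Structure M := inferInstance
        refine ⟨M, str', X, ⟨s₀, hs₀⟩, ?_⟩
        intro ψ hψ
        obtain ⟨φ, hφ, rfl⟩ := hsub hψ
        have hct : ∀ v (s : V → M), (ct v).realize s = s₀ v := fun v s =>
          Term.realize_constants
        show Models M (pin ct (lφ φ) (φ.onFormula g)) X
        rw [models_pin hct, models_onFormula g]
        have h1 : Models M φ {s₀} :=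
          models_mono (Set.singleton_subset_iff.mpr hs₀) (hmods φ hφ)
        refine models_agrees (subset_refl _) ⟨?_, ?_⟩ h1
        · intro s hs
          obtain ⟨u, hu⟩ := pinTeam_nonempty ⟨s₀, hs₀⟩ (lφ φ)
          refine ⟨u, hu, fun v hv => ?_⟩
          obtain ⟨s', _, hchar⟩ := pinTeam_mem hu
          rw [Set.eq_of_mem_singleton hs, hchar v, if_pos (hlφ φ v hv)]
        · intro u hu
          refine ⟨s₀, rfl, fun v hv => ?_⟩
          obtain ⟨s', _, hchar⟩ := pinTeam_mem hu
          rw [hchar v, if_pos (hlφ φ v hv)]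
          
    obtain ⟨N, strN, X, hXne, hsat⟩ := key
    letI : (L[[V]]).Structure N := strN
    letI strL : L.Structure N := g.reduct N
    haveI hexp : g.IsExpansionOn N := g.isExpansionOn_reduct N
    let c : V → N := fun v => ((L.con v : (L[[V]]).Constants) : N)
    refine ⟨N, strL, {c}, Set.singleton_nonempty c, ?_⟩
    intro φ hφ
    have hψ := hsat (T φ) ⟨φ, hφ, rfl⟩
    have hct : ∀ v (s : V → N), (ct v).realize s = c v := fun v s =>
      Term.realize_constants
    rw [show T φ = pin ct (lφ φ) (φ.onFormula g) from rfl, models_pin hct,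
      models_onFormula g] at hψ
    refine models_agrees (subset_refl _) ⟨?_, ?_⟩ hψ
    · intro u hu
      refine ⟨c, rfl, fun v hv => ?_⟩
      obtain ⟨s', _, hchar⟩ := pinTeam_mem hu
      rw [hchar v, if_pos (hlφ φ v hv)]
    · intro t ht
      obtain ⟨u, hu⟩ := pinTeam_nonempty hXne (lφ φ)
      refine ⟨u, hu, fun v hv => ?_⟩
      obtain ⟨s', _, hchar⟩ := pinTeam_mem hu
      rw [hchar v, if_pos (hlφ φ v hv), Set.eq_of_mem_singleton ht]

end TeamSemantics
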